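/- Let N ≥ 1 and let s : {1,…,N} → {0,1} be a sequence of bits, with associated sign sequence σ = ((-1)^{s_1},…,(-1)^{s_N}). Define the reduction of a finite sign sequence as the operation that deletes the first pair of adjacent equal signs and iterates until the sequence is alternating; let M be the length of the resulting reduced sequence. Then |∑_{j=1}^{N} (-1)^{j + s_j}| = M. -/
import Mathlib

def ReduceStep (l l' : List ℤ) : Prop :=
  ∃ (l₁ l₂ : List ℤ) (a : ℤ),
    l = l₁ ++ a :: a :: l₂ ∧ l' = l₁ ++ l₂ ∧ List.Chain' (· ≠ ·) (l₁ ++ [a])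

def asum : List ℤ → ℤ
  | [] => 0
  | a :: t => a - asum t

lemma asum_append (l₁ l₂ : List ℤ) :
    asum (l₁ ++ l₂) = asum l₁ + (-1) ^ l₁.length * asum l₂ := by
  induction l₁ with
  | nil => simp [asum]
  | cons a t ih =>
      show a - asum (t ++ l₂) = (a - asum t) + (-1) ^ (t.length + 1) * asum l₂
      rw [ih, pow_succ]
      ring

lemma asum_reduceStep {l l' : List ℤ} (h : ReduceStep l l') : asum l' = asum l := by
  obtain ⟨l₁, l₂, a, h1, h2, -⟩ := h
  subst h1 h2
  simp only [asum_append, asum]; ring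

lemma mem_reduceStep {l l' : List ℤ} (h : ReduceStep l l') {x : ℤ} (hx : x ∈ l') : x ∈ l := by
  obtain ⟨l₁, l₂, a, h1, h2, -⟩ := h
  subst h1 h2; simp at hx ⊢; tauto

lemma rtg_inv {l r : List ℤ} (h : Relation.ReflTransGen ReduceStep l r) :
    asum r = asum l ∧ (∀ x ∈ r, x ∈ l) := by
  induction h with
  | refl => exact ⟨rfl, fun x hx => hx⟩
  | tail _ hstep ih =>
      exact ⟨(asum_reduceStep hstep).trans ih.1, fun x hx => ih.2 x (mem_reduceStep hstep hx)⟩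

lemma asum_alt {l : List ℤ} (hpm : ∀ x ∈ l, x = 1 ∨ x = -1)
    (halt : List.Chain' (· ≠ ·) l) : asum l = l.headI * l.length := by
  induction l with
  | nil => simp [asum]
  | cons a t ih =>
    cases t with
    | nil => simp [asum]
    | cons b t' =>
      have hab : a ≠ b := (List.isChain_cons_cons.mp halt).1
      have hb : b = -a := by
        rcases hpm a (by simp) with ha | ha <;> rcases hpm b (by simp) with hb' | hb' <;>
          simp_all
      have h2 := ih (fun x hx => hpm x (List.mem_cons_of_mem _ hx)) (List.isChain_cons_cons.mp halt).2
      simp only [asum, List.headI, List.length_cons, hb] at h2 ⊢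
      push_cast at h2 ⊢
      linarith

lemma asum_ofFn : ∀ (N : ℕ) (f : Fin N → ℤ),
    asum (List.ofFn f) = ∑ j : Fin N, (-1) ^ (j : ℕ) * f j := by
  intro N
  induction N with
  | zero => intro f; simp [asum]
  | succ n ih =>
    intro f
    rw [List.ofFn_succ]
    show asum (f 0 :: List.ofFn fun i => f i.succ) = _
    rw [asum, ih, Fin.sum_univ_succ]
    simp only [Fin.val_zero, pow_zero, one_mul, Fin.val_succ, pow_succ]
    rw [sub_eq_add_neg, ← Finset.sum_neg_distrib]
    congr 1
    apply Finset.sum_congr rfl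
    intro j _
    ring

theorem abs_alternating_sum_eq_reduced_length
    (N : ℕ) (hN : 1 ≤ N) (s : Fin N → ℕ) (hs : ∀ j, s j ≤ 1)
    (r : List ℤ)
    (hred : Relation.ReflTransGen ReduceStep
      (List.ofFn fun j : Fin N => (-1 : ℤ) ^ (s j)) r)
    (halt : List.Chain' (· ≠ ·) r) :
    (∑ j : Fin N, (-1 : ℤ) ^ ((j : ℕ) + 1 + s j)).natAbs = r.length := by
  have hinv := rtg_inv hred
  have hmem : ∀ x ∈ r, x = 1 ∨ x = -1 := by
    intro x hx
    have := hinv.2 x hx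
    simp [List.mem_ofFn] at this
    obtain ⟨j, hj⟩ := this
    rcases Nat.le_one_iff_eq_zero_or_eq_one.mp (hs j) with h | h <;> rw [h] at hj <;>
      simp at hj <;> tauto
  have hsum : (∑ j : Fin N, (-1 : ℤ) ^ ((j : ℕ) + 1 + s j)) = - asum r := by
    rw [hinv.1, asum_ofFn, ← Finset.sum_neg_distrib]
    apply Finset.sum_congr rfl
    intro j _
    rw [pow_add, pow_add]
    ring
  rw [hsum, Int.natAbs_neg, asum_alt hmem halt]
  cases r with
  | nil => simp
  | cons a t =>
    rcases hmem a (by simp) with ha | ha <;> subst ha <;> simp <;> omega
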